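/- arXiv:2202.02762 — 2 statements merged into one kernel-verified Lean document; each statement's English description precedes it below -/
import Mathlib

section
/- The map h : ℝ_{>0} × 𝔻 → P(n), h(t,ρ) = t²ρ/4, is an isometry from the warped product ℝ_{>0} ×_{t} (𝔻, g^f) (warping function l(t) = t, base metric the Euclidean metric on ℝ_{>0}) onto P(n) equipped with the extended monotone metric g^f. In particular the pull-back metric G = h*g^f satisfies G_{(t,ρ)}(∂_t, ∂_t) = 1 and G_{(t,ρ)}(V,W) = t² G_{(1,ρ)}(V,W) for vertical vectors V, W. -/
open Matrix
open scoped ComplexOrder BigOperators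

/-- `gf ρ X Y` abstracts the monotone metric `g^f_ρ(X,Y)` on `P(n)` associated
with an operator monotone `f` with `f(1)=1`, `f(t)=t f(1/t)`; we record the
properties given by the contour-integral definition: unitary invariance,
bilinearity/symmetry in the tangent slots, and the diagonal formula
`g^f_{diag d}(X,X) = Σ_{i,j} c(dᵢ,dⱼ)|X_{ij}|²`, `c(x,y) = 1/(y f(x/y))`.

The map `h(t,ρ) = t²ρ/4` is an isometry of the warped product
`ℝ_{>0} ×_t (𝔻, g^f)` onto `(P(n), g^f)`: `h` is injective, hits every positive
definite matrix, and its differential `dh_{(t,ρ)}(s,V) = (ts/2)ρ + (t²/4)V`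
pulls `g^f` back to `dt² + t² g^f|_{(1,·)}`; in particular
`G_{(t,ρ)}(∂_t,∂_t) = 1`, `G_{(t,ρ)}(∂_t, V) = 0`, and
`G_{(t,ρ)}(V,W) = t² G_{(1,ρ)}(V,W)` for vertical `V`, `W` (trace-zero
Hermitian tangents of `𝔻`). -/
theorem stmt_13 (n : ℕ) (hn : 0 < n)
    (f : ℝ → ℝ) (hf1 : f 1 = 1) (hfsym : ∀ s : ℝ, 0 < s → f s = s * f (1 / s))
    (gf : Matrix (Fin n) (Fin n) ℂ → Matrix (Fin n) (Fin n) ℂ →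
      Matrix (Fin n) (Fin n) ℂ → ℝ)
    (hunit : ∀ U : Matrix (Fin n) (Fin n) ℂ, U ∈ Matrix.unitaryGroup (Fin n) ℂ →
      ∀ ρ X Y, gf (U * ρ * star U) (U * X * star U) (U * Y * star U) = gf ρ X Y)
    (hsymm : ∀ ρ X Y, gf ρ X Y = gf ρ Y X)
    (haddR : ∀ ρ X Y Y', gf ρ X (Y + Y') = gf ρ X Y + gf ρ X Y')
    (hsmulR : ∀ ρ X Y (r : ℝ), gf ρ X ((r : ℂ) • Y) = r * gf ρ X Y)
    (hdiag : ∀ d : Fin n → ℝ, (∀ i, 0 < d i) →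
      ∀ X : Matrix (Fin n) (Fin n) ℂ, X.IsHermitian →
      gf (Matrix.diagonal (fun i => (d i : ℂ))) X X
        = ∑ i, ∑ j, (1 / (d j * f (d i / d j))) * Complex.normSq (X i j)) :
    -- h : (t, ρ) ↦ t²ρ/4 is a bijection from ℝ_{>0} × 𝔻 onto P(n) ...
    (∀ t s : ℝ, 0 < t → 0 < s →
      ∀ ρ τ : Matrix (Fin n) (Fin n) ℂ, ρ.PosDef → τ.PosDef →
        ρ.trace = 1 → τ.trace = 1 →
        ((t ^ 2 / 4 : ℂ)) • ρ = ((s ^ 2 / 4 : ℂ)) • τ → t = s ∧ ρ = τ) ∧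
    (∀ A : Matrix (Fin n) (Fin n) ℂ, A.PosDef →
      ∃ t : ℝ, 0 < t ∧ ∃ ρ : Matrix (Fin n) (Fin n) ℂ, ρ.PosDef ∧ ρ.trace = 1 ∧
        A = ((t ^ 2 / 4 : ℂ)) • ρ) ∧
    -- ... and the pull-back metric G = h* g^f is the warped product metric
    -- dt² + t² g^f|_{t=1}:
    (∀ t : ℝ, 0 < t → ∀ ρ V W : Matrix (Fin n) (Fin n) ℂ,
      ρ.PosDef → ρ.trace = 1 →
      V.IsHermitian → V.trace = 0 → W.IsHermitian → W.trace = 0 →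
      -- G_{(t,ρ)}(∂_t, ∂_t) = 1
      gf ((t ^ 2 / 4 : ℂ) • ρ) ((t / 2 : ℂ) • ρ) ((t / 2 : ℂ) • ρ) = 1 ∧
      -- G_{(t,ρ)}(∂_t, V) = 0
      gf ((t ^ 2 / 4 : ℂ) • ρ) ((t / 2 : ℂ) • ρ) ((t ^ 2 / 4 : ℂ) • V) = 0 ∧
      -- G_{(t,ρ)}(V, W) = t² G_{(1,ρ)}(V, W)
      gf ((t ^ 2 / 4 : ℂ) • ρ) ((t ^ 2 / 4 : ℂ) • V) ((t ^ 2 / 4 : ℂ) • W)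
        = t ^ 2 * gf ((1 / 4 : ℂ) • ρ) ((1 / 4 : ℂ) • V) ((1 / 4 : ℂ) • W)) := by
  classical
  -- left homogeneity
  have hsmulL : ∀ ρ X Y (r : ℝ), gf ρ ((r : ℂ) • X) Y = r * gf ρ X Y := by
    intro ρ X Y r
    rw [hsymm, hsmulR, hsymm]
  -- polarization identity
  have pol : ∀ ρ X Y, 2 * gf ρ X Y = gf ρ (X + Y) (X + Y) - gf ρ X X - gf ρ Y Y := by
    intro ρ X Y
    have haddL : ∀ Z, gf ρ (X + Y) Z = gf ρ X Z + gf ρ Y Z := by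
      intro Z
      rw [hsymm, haddR, hsymm ρ Z X, hsymm ρ Z Y]
    rw [haddL, haddR, haddR, hsymm ρ Y X]
    ring
  -- conjugate back by a unitary
  have conjback : ∀ U : Matrix (Fin n) (Fin n) ℂ, U ∈ Matrix.unitaryGroup (Fin n) ℂ →
      ∀ M : Matrix (Fin n) (Fin n) ℂ, U * (star U * M * U) * star U = M := by
    intro U hU M
    have h1 : U * star U = 1 := (Matrix.mem_unitaryGroup_iff).mp hU
    calc U * (star U * M * U) * star U = (U * star U) * M * (U * star U) := by
          noncomm_ring
      _ = M := by rw [h1, one_mul, mul_one]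
  -- bilinear diagonal formula
  have hdiag2 : ∀ d : Fin n → ℝ, (∀ i, 0 < d i) →
      ∀ X Y : Matrix (Fin n) (Fin n) ℂ, X.IsHermitian → Y.IsHermitian →
      gf (Matrix.diagonal (fun i => (d i : ℂ))) X Y
        = ∑ i, ∑ j, (1 / (d j * f (d i / d j))) *
            (X i j * (starRingEnd ℂ) (Y i j)).re := by
    intro d hd X Y hX hY
    have hXY : (X + Y).IsHermitian := hX.add hY
    have h2 := pol (Matrix.diagonal (fun i => (d i : ℂ))) X Y
    rw [hdiag d hd _ hXY, hdiag d hd _ hX, hdiag d hd _ hY] at h2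
    have h3 : (∑ i, ∑ j, (1 / (d j * f (d i / d j))) * Complex.normSq ((X + Y) i j))
        = (∑ i, ∑ j, (1 / (d j * f (d i / d j))) * Complex.normSq (X i j))
        + (∑ i, ∑ j, (1 / (d j * f (d i / d j))) * Complex.normSq (Y i j))
        + 2 * ∑ i, ∑ j, (1 / (d j * f (d i / d j))) *
            (X i j * (starRingEnd ℂ) (Y i j)).re := by
      rw [Finset.mul_sum, ← Finset.sum_add_distrib, ← Finset.sum_add_distrib]
      refine Finset.sum_congr rfl fun i _ => ?_
      rw [Finset.mul_sum, ← Finset.sum_add_distrib, ← Finset.sum_add_distrib]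
      refine Finset.sum_congr rfl fun j _ => ?_
      rw [Matrix.add_apply, Complex.normSq_add]
      ring
    linarith
  -- spectral decomposition packaged
  have transport : ∀ ρ : Matrix (Fin n) (Fin n) ℂ, ρ.PosDef →
      ∃ (U : Matrix (Fin n) (Fin n) ℂ) (d : Fin n → ℝ),
        U ∈ Matrix.unitaryGroup (Fin n) ℂ ∧ (∀ i, 0 < d i) ∧
        ρ = U * Matrix.diagonal (fun i => (d i : ℂ)) * star U ∧
        Matrix.trace ρ = ((∑ i, d i : ℝ) : ℂ) := by
    intro ρ hρ
    refine ⟨hρ.1.eigenvectorUnitary, hρ.1.eigenvalues,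
      (hρ.1.eigenvectorUnitary).2, hρ.eigenvalues_pos, ?_, ?_⟩
    · have := hρ.1.spectral_theorem
      rw [Unitary.conjStarAlgAut_apply] at this
      convert this using 3 <;> rfl
    · have hU : star (hρ.1.eigenvectorUnitary : Matrix (Fin n) (Fin n) ℂ) *
          (hρ.1.eigenvectorUnitary : Matrix (Fin n) (Fin n) ℂ) = 1 :=
        (Matrix.mem_unitaryGroup_iff').mp (hρ.1.eigenvectorUnitary).2
      conv_lhs => rw [hρ.1.spectral_theorem, Unitary.conjStarAlgAut_apply]
      rw [Matrix.trace_mul_cycle, hU, one_mul, Matrix.trace_diagonal]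
      push_cast
      rfl
  -- scaling of the base point
  have scale : ∀ ρ : Matrix (Fin n) (Fin n) ℂ, ρ.PosDef →
      ∀ lam : ℝ, 0 < lam → ∀ X Y : Matrix (Fin n) (Fin n) ℂ,
      X.IsHermitian → Y.IsHermitian →
      gf ((lam : ℂ) • ρ) X Y = (1 / lam) * gf ρ X Y := by
    intro ρ hρ lam hlam X Y hX hY
    obtain ⟨U, d, hU, hd, hspec, -⟩ := transport ρ hρ
    set X' := star U * X * U with hX'def
    set Y' := star U * Y * U with hY'def
    have hsU : star U = Uᴴ := rfl
    have hX' : X'.IsHermitian := by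
      rw [hX'def, hsU]
      exact Matrix.isHermitian_conjTranspose_mul_mul U hX
    have hY' : Y'.IsHermitian := by
      rw [hY'def, hsU]
      exact Matrix.isHermitian_conjTranspose_mul_mul U hY
    have hXe : U * X' * star U = X := conjback U hU X
    have hYe : U * Y' * star U = Y := conjback U hU Y
    have hDs : (lam : ℂ) • Matrix.diagonal (fun i => (d i : ℂ))
        = Matrix.diagonal (fun i => ((lam * d i : ℝ) : ℂ)) := by
      ext i j
      rcases eq_or_ne i j with h | h
      · subst h
        simp only [Matrix.smul_apply, Matrix.diagonal_apply_eq, smul_eq_mul]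
        push_cast
        ring
      · simp [Matrix.diagonal_apply_ne _ h]
    have hρe : (lam : ℂ) • ρ
        = U * Matrix.diagonal (fun i => ((lam * d i : ℝ) : ℂ)) * star U := by
      rw [hspec, ← hDs, Matrix.mul_smul, Matrix.smul_mul]
    have h1 : gf ((lam : ℂ) • ρ) X Y
        = gf (Matrix.diagonal (fun i => ((lam * d i : ℝ) : ℂ))) X' Y' := by
      conv_lhs => rw [hρe, ← hXe, ← hYe]
      exact hunit U hU _ _ _
    have h2 : gf ρ X Y = gf (Matrix.diagonal (fun i => (d i : ℂ))) X' Y' := by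
      conv_lhs => rw [hspec, ← hXe, ← hYe]
      exact hunit U hU _ _ _
    rw [h1, h2, hdiag2 (fun i => lam * d i) (fun i => mul_pos hlam (hd i)) X' Y' hX' hY',
      hdiag2 d hd X' Y' hX' hY', Finset.mul_sum]
    refine Finset.sum_congr rfl fun i _ => ?_
    rw [Finset.mul_sum]
    refine Finset.sum_congr rfl fun j _ => ?_
    rw [mul_div_mul_left _ _ (ne_of_gt hlam), one_div, one_div, one_div,
      mul_assoc lam, mul_inv]
    ring
  -- gf ρ ρ X = Re (trace X)
  have traceform : ∀ ρ : Matrix (Fin n) (Fin n) ℂ, ρ.PosDef →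
      ∀ X : Matrix (Fin n) (Fin n) ℂ, X.IsHermitian →
      gf ρ ρ X = (Matrix.trace X).re := by
    intro ρ hρ X hX
    obtain ⟨U, d, hU, hd, hspec, -⟩ := transport ρ hρ
    set D := Matrix.diagonal (fun i => (d i : ℂ)) with hD
    set X' := star U * X * U with hX'def
    have hsU : star U = Uᴴ := rfl
    have hX' : X'.IsHermitian := by
      rw [hX'def, hsU]
      exact Matrix.isHermitian_conjTranspose_mul_mul U hX
    have hXe : U * X' * star U = X := conjback U hU X
    have hDH : D.IsHermitian := by
      rw [hD]
      refine Matrix.isHermitian_diagonal_of_self_adjoint _ ?_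
      show star _ = _
      funext i
      exact Complex.conj_ofReal _
    have h1 : gf ρ ρ X = gf D D X' := by
      conv_lhs => rw [hspec, ← hXe, hD]
      exact hunit U hU _ _ _
    have htrX : Matrix.trace X' = Matrix.trace X := by
      rw [hX'def, Matrix.trace_mul_cycle, (Matrix.mem_unitaryGroup_iff).mp hU, one_mul]
    rw [h1, hdiag2 d hd D X' hDH hX']
    have hsum : ∀ i : Fin n, (∑ j, (1 / (d j * f (d i / d j))) *
        (D i j * (starRingEnd ℂ) (X' i j)).re) = (X' i i).re := by
      intro i
      rw [Finset.sum_eq_single i]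
      · rw [hD]
        rw [Matrix.diagonal_apply_eq, div_self (ne_of_gt (hd i)), hf1, mul_one,
          Complex.re_ofReal_mul, Complex.conj_re]
        field_simp
        try exact mul_div_cancel_left₀ _ (ne_of_gt (hd i))
      · intro j _ hj
        rw [hD, Matrix.diagonal_apply_ne _ (Ne.symm hj)]
        simp
      · intro h
        exact absurd (Finset.mem_univ i) h
    calc (∑ i, ∑ j, (1 / (d j * f (d i / d j))) *
          (D i j * (starRingEnd ℂ) (X' i j)).re)
        = ∑ i, (X' i i).re := Finset.sum_congr rfl fun i _ => hsum i
      _ = (Matrix.trace X').re := by rw [Matrix.trace, Complex.re_sum]; rfl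
      _ = (Matrix.trace X).re := by rw [htrX]
  refine ⟨?_, ?_, ?_⟩
  · -- injectivity
    intro t s ht hs ρ τ hρ hτ hρt hτt heq
    have h1 := congrArg Matrix.trace heq
    rw [Matrix.trace_smul, Matrix.trace_smul, hρt, hτt, smul_eq_mul, smul_eq_mul,
      mul_one, mul_one] at h1
    have h2 : t ^ 2 = s ^ 2 := by
      have h3 : ((t ^ 2 : ℝ) : ℂ) = ((s ^ 2 : ℝ) : ℂ) := by
        push_cast
        field_simp at h1
        exact_mod_cast h1
      exact_mod_cast h3
    have hts : t = s := by
      apply le_antisymm <;> nlinarith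
    subst hts
    have hc : (t ^ 2 / 4 : ℂ) ≠ 0 := by
      have h0 : (t : ℂ) ≠ 0 := by exact_mod_cast ht.ne'
      simp [div_eq_zero_iff, pow_eq_zero_iff, h0]
    exact ⟨rfl, smul_right_injective _ hc heq⟩
  · -- surjectivity
    intro A hA
    obtain ⟨U, d, hU, hd, hspec, htr⟩ := transport A hA
    have : Nonempty (Fin n) := Fin.pos_iff_nonempty.mp hn
    set r : ℝ := ∑ i, d i with hr
    have hrpos : 0 < r := Finset.sum_pos (fun i _ => hd i) Finset.univ_nonempty
    refine ⟨2 * Real.sqrt r, by positivity, ((r⁻¹ : ℝ) : ℂ) • A, ?_, ?_, ?_⟩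
    · refine Matrix.PosDef.of_dotProduct_mulVec_pos ?_ ?_
      · have hAH := hA.1
        show _ = _
        rw [Matrix.conjTranspose_smul, hAH.eq]
        congr 1
        exact Complex.conj_ofReal _
      · intro x hx
        have h2 := hA.dotProduct_mulVec_pos hx
        rw [Matrix.smul_mulVec, dotProduct_smul, smul_eq_mul]
        have hrc : (0 : ℂ) < ((r⁻¹ : ℝ) : ℂ) := by
          rw [Complex.zero_lt_real]
          positivity
        exact mul_pos hrc h2
    · rw [Matrix.trace_smul, htr, smul_eq_mul, ← Complex.ofReal_mul,
        inv_mul_cancel₀ hrpos.ne']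
      rfl
    · have ht4 : ((((2 * Real.sqrt r : ℝ)) : ℂ) ^ 2 / 4) = (r : ℂ) := by
        push_cast
        rw [mul_pow, ← Complex.ofReal_pow, Real.sq_sqrt hrpos.le]
        ring
      rw [ht4, smul_smul, ← Complex.ofReal_mul, mul_inv_cancel₀ hrpos.ne',
        Complex.ofReal_one, one_smul]
  · -- the pull-back metric is the warped product metric
    intro t ht ρ V W hρ htr hV hVtr hW hWtr
    have hρH := hρ.1
    have htr1 : (Matrix.trace ρ).re = 1 := by rw [htr]; simp
    have hVtr0 : (Matrix.trace V).re = 0 := by rw [hVtr]; simp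
    have l1 : (0 : ℝ) < t ^ 2 / 4 := by positivity
    have e1 : (t ^ 2 / 4 : ℂ) = ((t ^ 2 / 4 : ℝ) : ℂ) := by push_cast; ring
    have e2 : (t / 2 : ℂ) = ((t / 2 : ℝ) : ℂ) := by push_cast; ring
    have e4 : (1 / 4 : ℂ) = ((1 / 4 : ℝ) : ℂ) := by norm_num
    refine ⟨?_, ?_, ?_⟩
    · rw [e1, e2, hsmulR, hsmulL, scale ρ hρ _ l1 ρ ρ hρH hρH,
        traceform ρ hρ ρ hρH, htr1]
      field_simp
      ring
    · rw [e1, e2, hsmulR, hsmulL, scale ρ hρ _ l1 ρ V hρH hV,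
        traceform ρ hρ V hV, hVtr0]
      ring
    · rw [e1, e4, hsmulR, hsmulL, hsmulR, hsmulL,
        scale ρ hρ _ l1 V W hV hW, scale ρ hρ _ (by norm_num : (0:ℝ) < 1/4) V W hV hW]
      field_simp
end

section
/- Let (L^{n+1}, ds²) be the Takano Gaussian space: L^{n+1} = ℝ_{>0} × ℝⁿ with metric ds² = (2n dσ² + dm₁² + ... + dm_n²)/σ². Then for each α ∈ ℝ, the α-connection given by ∇^{(α)}_{∂_i}∂_j = ((1−α)/(2nσ))δ_{ij}∂_σ, ∇^{(α)}_{∂_i}∂_σ = ∇^{(α)}_{∂_σ}∂_i = −((1+α)/σ)∂_i, ∇^{(α)}_{∂_σ}∂_σ = −((1+2α)/σ)∂_σ makes (L^{n+1}, ds², ∇^{(α)}) a space of constant curvature −(1−α)(1+α)/(2n); in particular the curvature tensor vanishes for α = ±1. -/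
open scoped BigOperators

/-- Components of the Fisher metric of the Takano Gaussian space
`L^{n+1} = ℝ_{>0} × ℝⁿ` (index `0` is the `σ`-direction):
`G_{σσ} = 2n/σ²`, `G_{ij} = δ_{ij}/σ²`, `G_{σi} = 0`. -/
noncomputable def takanoG (n : ℕ) (i j : Fin (n + 1)) (σ : ℝ) : ℝ :=
  if i = 0 ∧ j = 0 then 2 * n / σ ^ 2 else if i = j then 1 / σ ^ 2 else 0

/-- Christoffel symbols `Γ^k_{ij}` of the `α`-connection of the Takano Gaussian
space: `∇^{(α)}_{∂_i}∂_j = ((1−α)/(2nσ))δ_{ij}∂_σ`,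
`∇^{(α)}_{∂_i}∂_σ = ∇^{(α)}_{∂_σ}∂_i = −((1+α)/σ)∂_i`,
`∇^{(α)}_{∂_σ}∂_σ = −((1+2α)/σ)∂_σ`. -/
noncomputable def takanoΓ (n : ℕ) (α : ℝ) (i j k : Fin (n + 1)) (σ : ℝ) : ℝ :=
  if i = 0 ∧ j = 0 then (if k = 0 then -(1 + 2 * α) / σ else 0)
  else if i = 0 then (if k = j then -(1 + α) / σ else 0)
  else if j = 0 then (if k = i then -(1 + α) / σ else 0)
  else if i = j ∧ k = 0 then (1 - α) / (2 * n * σ) else 0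

/-- The component `R^l_{ijk}` of the curvature tensor
`R(∂_i,∂_j)∂_k = ∂_i Γ^l_{jk} − ∂_j Γ^l_{ik} + Γ^m_{jk}Γ^l_{im} − Γ^m_{ik}Γ^l_{jm}`;
all Christoffel symbols depend only on the coordinate `σ` (index `0`). -/
noncomputable def takanoRiem (n : ℕ) (α : ℝ) (i j k l : Fin (n + 1)) (σ : ℝ) : ℝ :=
  (if i = 0 then deriv (fun s => takanoΓ n α j k l s) σ else 0)
  - (if j = 0 then deriv (fun s => takanoΓ n α i k l s) σ else 0)
  + ∑ m : Fin (n + 1), takanoΓ n α j k m σ * takanoΓ n α i m l σ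
  - ∑ m : Fin (n + 1), takanoΓ n α i k m σ * takanoΓ n α j m l σ


lemma tg_homog (n : ℕ) (α : ℝ) (i j k : Fin (n+1)) (σ : ℝ) :
    takanoΓ n α i j k σ = takanoΓ n α i j k 1 / σ := by
  unfold takanoΓ; split_ifs <;> simp [div_div]

lemma tg_deriv (n : ℕ) (α : ℝ) (i j k : Fin (n+1)) (σ : ℝ) (hσ : σ ≠ 0) :
    deriv (fun s => takanoΓ n α i j k s) σ = -(takanoΓ n α i j k σ) / σ := by
  have h : (fun s => takanoΓ n α i j k s) =ᶠ[nhds σ] fun s => takanoΓ n α i j k 1 * s⁻¹ := by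
    filter_upwards with s using by rw [tg_homog]; ring
  rw [h.deriv_eq, deriv_const_mul _ (differentiableAt_inv hσ), deriv_inv,
    tg_homog n α i j k σ]
  field_simp

lemma tg_supp (n : ℕ) (α : ℝ) (i j m : Fin (n+1)) (σ : ℝ) :
    takanoΓ n α i j m σ =
      if m = (if i = 0 then j else if j = 0 then i else 0)
      then takanoΓ n α i j (if i = 0 then j else if j = 0 then i else 0) σ else 0 := by
  unfold takanoΓ
  split_ifs <;> simp_all

lemma tg_sum (n : ℕ) (α : ℝ) (i j k l : Fin (n+1)) (σ : ℝ) :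
    ∑ m : Fin (n + 1), takanoΓ n α j k m σ * takanoΓ n α i m l σ =
      takanoΓ n α j k (if j = 0 then k else if k = 0 then j else 0) σ *
      takanoΓ n α i (if j = 0 then k else if k = 0 then j else 0) l σ := by
  set c := (if j = 0 then k else if k = 0 then j else 0) with hc
  calc ∑ m : Fin (n + 1), takanoΓ n α j k m σ * takanoΓ n α i m l σ
      = ∑ m : Fin (n + 1), (if m = c then takanoΓ n α j k c σ * takanoΓ n α i m l σ else 0) := by
        refine Finset.sum_congr rfl fun m _ => ?_
        rw [tg_supp n α j k m, ← hc]
        split_ifs with h <;> simp [h]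
    _ = takanoΓ n α j k c σ * takanoΓ n α i c l σ := by
        rw [Finset.sum_ite_eq' Finset.univ c (fun m => takanoΓ n α j k c σ * takanoΓ n α i m l σ)]
        simp

set_option maxHeartbeats 8000000 in
set_option maxRecDepth 100000 in

/-- `(L^{n+1}, ds², ∇^{(α)})` is a space of constant curvature
`−(1−α)(1+α)/(2n)`, i.e. `R(X,Y)Z = k{g(Y,Z)X − g(X,Z)Y}` with that `k`;
in particular the curvature vanishes for `α = ±1`. -/
theorem stmt_14 (n : ℕ) (hn : 0 < n) (α : ℝ)
    (i j k l : Fin (n + 1)) (σ : ℝ) (hσ : 0 < σ) :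
    takanoRiem n α i j k l σ
      = (-(1 - α) * (1 + α) / (2 * n)) *
        (takanoG n j k σ * (if l = i then 1 else 0)
          - takanoG n i k σ * (if l = j then 1 else 0))
    ∧ ((α = 1 ∨ α = -1) → takanoRiem n α i j k l σ = 0) := by
  have hσ' : σ ≠ 0 := ne_of_gt hσ
  have hn' : (n:ℝ) ≠ 0 := Nat.cast_ne_zero.2 hn.ne'
  have key : takanoRiem n α i j k l σ
      = (-(1 - α) * (1 + α) / (2 * n)) *
        (takanoG n j k σ * (if l = i then 1 else 0)
          - takanoG n i k σ * (if l = j then 1 else 0)) := by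
    unfold takanoRiem
    rw [tg_sum, tg_sum, tg_deriv n α j k l σ hσ', tg_deriv n α i k l σ hσ']
    rcases eq_or_ne i 0 with hi | hi <;> rcases eq_or_ne j 0 with hj | hj <;>
      rcases eq_or_ne k 0 with hk | hk <;>
      simp only [takanoΓ, takanoG, hi, hj, hk, if_true, if_false, eq_self_iff_true,
        true_and, and_true, false_and, and_false, not_false_iff, and_self,
        ite_true, ite_false] <;>
      split_ifs <;>
      first
        | (exfalso; subst_vars; grind; done)
        | (field_simp; ring)
        | field_simp
  refine ⟨key, ?_⟩
  rintro (rfl | rfl) <;> rw [key] <;> norm_num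
end
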